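/- arXiv:2504.06453 — 2 statements merged into one kernel-verified Lean document; each statement's English description precedes it below -/
import Mathlib

section
/- For probability measures μ, ν on ℝ with finite first moment, the 1-Wasserstein distance equals the L¹ distance between their cumulative distribution functions: W₁(μ,ν) = ∫_ℝ |F_μ(v) − F_ν(v)| dv. -/
open MeasureTheory


/-- CDF of a measure on ℝ. -/
noncomputable def cdfFun (μ : Measure ℝ) (v : ℝ) : ℝ := (μ (Set.Iic v)).toReal

/-- 1-Wasserstein distance defined as the infimum over couplings of the expected distance. -/
noncomputable def W1 (μ ν : Measure ℝ) : ℝ :=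
  sInf {c : ℝ | ∃ π : Measure (ℝ × ℝ), IsProbabilityMeasure π ∧
    π.map Prod.fst = μ ∧ π.map Prod.snd = ν ∧
    c = ∫ p : ℝ × ℝ, |p.1 - p.2| ∂π}

open Set Filter ProbabilityTheory
open scoped Topology ENNReal

noncomputable def quant (μ : Measure ℝ) (t : ℝ) : ℝ := sInf {x | t ≤ cdfFun μ x}

variable {μ : Measure ℝ} [IsProbabilityMeasure μ]

lemma cdfFun_eq_cdf (v : ℝ) : cdfFun μ v = cdf μ v := (cdf_eq_real μ v).symm

lemma quant_set_nonempty {t : ℝ} (ht : t < 1) : {x | t ≤ cdfFun μ x}.Nonempty := by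
  have h := tendsto_cdf_atTop μ
  have : ∀ᶠ x in atTop, t ≤ cdf μ x := h.eventually_const_le ht
  obtain ⟨x, hx⟩ := this.exists
  exact ⟨x, by rwa [mem_setOf_eq, cdfFun_eq_cdf]⟩

lemma quant_set_bddBelow {t : ℝ} (ht : 0 < t) : BddBelow {x | t ≤ cdfFun μ x} := by
  have h := tendsto_cdf_atBot μ
  have : ∀ᶠ x in atBot, cdf μ x < t := h.eventually_lt_const ht
  obtain ⟨x0, hx0⟩ := this.exists
  refine ⟨x0, fun y hy => ?_⟩
  by_contra hxy
  push_neg at hxy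
  have : cdf μ y ≤ cdf μ x0 := monotone_cdf μ hxy.le
  rw [mem_setOf_eq, cdfFun_eq_cdf] at hy
  linarith

lemma quant_le_iff {t v : ℝ} (ht : t ∈ Set.Ioo (0:ℝ) 1) :
    quant μ t ≤ v ↔ t ≤ cdfFun μ v := by
  constructor
  · intro h
    rw [cdfFun_eq_cdf]
    have hrc : Tendsto (cdf μ) (𝓝[>] v) (𝓝 (cdf μ v)) :=
      ((cdf μ).right_continuous v).tendsto.mono_left (nhdsWithin_mono v Ioi_subset_Ici_self)
    refine ge_of_tendsto hrc ?_
    filter_upwards [self_mem_nhdsWithin] with w hw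
    have hlt : quant μ t < w := lt_of_le_of_lt h hw
    obtain ⟨y, hy, hyw⟩ := (csInf_lt_iff (quant_set_bddBelow ht.1)
      (quant_set_nonempty ht.2)).mp hlt
    calc t ≤ cdfFun μ y := hy
    _ = cdf μ y := cdfFun_eq_cdf y
    _ ≤ cdf μ w := monotone_cdf μ hyw.le
  · intro h
    exact csInf_le (quant_set_bddBelow ht.1) h

lemma quant_monotoneOn : MonotoneOn (quant μ) (Set.Ioo (0:ℝ) 1) := by
  intro a ha b hb hab
  refine le_csInf (quant_set_nonempty hb.2) (fun y hy => ?_)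
  exact csInf_le (quant_set_bddBelow ha.1) (le_trans hab hy)

lemma quant_aemeasurable :
    AEMeasurable (quant μ) (volume.restrict (Set.Ioo (0:ℝ) 1)) :=
  aemeasurable_restrict_of_monotoneOn measurableSet_Ioo quant_monotoneOn

lemma cdfFun_mem_Icc (v : ℝ) : cdfFun μ v ∈ Set.Icc (0:ℝ) 1 := by
  rw [cdfFun_eq_cdf]; exact ⟨cdf_nonneg μ v, cdf_le_one μ v⟩

lemma map_quant : (volume.restrict (Set.Ioo (0:ℝ) 1)).map (quant μ) = μ := by
  have hprob : IsProbabilityMeasure (volume.restrict (Set.Ioo (0:ℝ) 1)) :=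
    ⟨by simp [Real.volume_Ioo]⟩
  have hmap : IsProbabilityMeasure ((volume.restrict (Set.Ioo (0:ℝ) 1)).map (quant μ)) :=
    Measure.isProbabilityMeasure_map quant_aemeasurable
  refine Measure.ext_of_Iic _ _ (fun v => ?_)
  rw [Measure.map_apply_of_aemeasurable quant_aemeasurable measurableSet_Iic]
  have hset : Set.Ioo (0:ℝ) 1 ∩ (quant μ ⁻¹' Set.Iic v) =
      Set.Ioo (0:ℝ) 1 ∩ Set.Iic (cdfFun μ v) := by
    ext t
    simp only [mem_inter_iff, mem_preimage, mem_Iic, and_congr_right_iff]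
    intro ht
    exact quant_le_iff ht
  rw [Measure.restrict_apply₀' measurableSet_Ioo.nullMeasurableSet, inter_comm, hset]
  obtain ⟨h0, h1⟩ := cdfFun_mem_Icc (μ := μ) v
  rcases lt_or_eq_of_le h1 with h1 | h1
  · have : Set.Ioo (0:ℝ) 1 ∩ Set.Iic (cdfFun μ v) = Set.Ioc 0 (cdfFun μ v) := by
      ext t
      simp only [mem_inter_iff, mem_Ioo, mem_Iic, mem_Ioc]
      constructor
      · rintro ⟨⟨ht0, _⟩, htv⟩; exact ⟨ht0, htv⟩
      · rintro ⟨ht0, htv⟩; exact ⟨⟨ht0, lt_of_le_of_lt htv h1⟩, htv⟩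
    rw [this, Real.volume_Ioc, sub_zero]
    unfold cdfFun
    rw [ENNReal.ofReal_toReal (measure_ne_top μ _)]
  · have : Set.Ioo (0:ℝ) 1 ∩ Set.Iic (cdfFun μ v) = Set.Ioo 0 1 := by
      rw [inter_eq_left]; intro t ht; exact le_of_lt (h1 ▸ ht.2)
    rw [this, Real.volume_Ioo, sub_zero, ENNReal.ofReal_one]
    unfold cdfFun at h1
    rw [← ENNReal.ofReal_toReal (measure_ne_top μ (Set.Iic v)), h1, ENNReal.ofReal_one]

noncomputable def E (x y v : ℝ) : ℝ≥0∞ :=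
  (Set.Ico (min x y) (max x y)).indicator 1 v

lemma lint_E (x y : ℝ) : ∫⁻ v, E x y v = ENNReal.ofReal |x - y| := by
  unfold E
  rw [lintegral_indicator measurableSet_Ico]
  simp [Real.volume_Ico, max_sub_min_eq_abs, abs_sub_comm]

def SD (v : ℝ) : Set (ℝ × ℝ) :=
  {p | (p.1 ≤ v ∧ ¬ p.2 ≤ v) ∨ (p.2 ≤ v ∧ ¬ p.1 ≤ v)}

lemma SD_measurable (v : ℝ) : MeasurableSet (SD v) := by
  unfold SD
  have h1 : MeasurableSet {p : ℝ × ℝ | p.1 ≤ v} :=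
    measurableSet_le measurable_fst measurable_const
  have h2 : MeasurableSet {p : ℝ × ℝ | p.2 ≤ v} :=
    measurableSet_le measurable_snd measurable_const
  exact (h1.inter h2.compl).union (h2.inter h1.compl)

lemma E_eq_indicator (x y v : ℝ) :
    E x y v = (SD v).indicator 1 (x, y) := by
  unfold E SD
  rcases le_total x y with h | h <;>
    by_cases hx : x ≤ v <;> by_cases hy : y ≤ v <;>
    simp_all [Set.indicator_apply, min_eq_left, min_eq_right, max_eq_left, max_eq_right,
      not_le] <;> first
    | rfl
    | linarith

lemma E_uncurry_measurable :
    Measurable (fun q : (ℝ × ℝ) × ℝ => E q.1.1 q.1.2 q.2) := by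
  have : (fun q : (ℝ × ℝ) × ℝ => E q.1.1 q.1.2 q.2) =
      Set.indicator {q : (ℝ × ℝ) × ℝ | min q.1.1 q.1.2 ≤ q.2 ∧ q.2 < max q.1.1 q.1.2} 1 := by
    funext q
    simp [E, Set.indicator_apply, Set.mem_Ico]
  rw [this]
  refine Measurable.indicator measurable_const ?_
  refine MeasurableSet.inter ?_ ?_
  · exact measurableSet_le (measurable_fst.fst.min measurable_fst.snd) measurable_snd
  · exact measurableSet_lt measurable_snd (measurable_fst.fst.max measurable_fst.snd)

lemma lintegral_cost_eq (π : Measure (ℝ × ℝ)) [IsProbabilityMeasure π] :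
    ∫⁻ p, ENNReal.ofReal |p.1 - p.2| ∂π = ∫⁻ v, π (SD v) ∂(volume : Measure ℝ) := by
  calc ∫⁻ p, ENNReal.ofReal |p.1 - p.2| ∂π
      = ∫⁻ p, ∫⁻ v, E p.1 p.2 v ∂(volume : Measure ℝ) ∂π := by
        refine lintegral_congr (fun p => ?_)
        rw [lint_E]
    _ = ∫⁻ v, ∫⁻ p, E p.1 p.2 v ∂π ∂(volume : Measure ℝ) :=
        lintegral_lintegral_swap E_uncurry_measurable.aemeasurable
    _ = ∫⁻ v, π (SD v) ∂(volume : Measure ℝ) := by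
        refine lintegral_congr (fun v => ?_)
        have : ∀ p : ℝ × ℝ, E p.1 p.2 v = (SD v).indicator 1 p := fun p => E_eq_indicator p.1 p.2 v
        simp_rw [this]
        rw [lintegral_indicator_one (SD_measurable v)]

lemma sd_ge (μ ν : Measure ℝ) [IsProbabilityMeasure μ] [IsProbabilityMeasure ν]
    (π : Measure (ℝ × ℝ)) [IsProbabilityMeasure π]
    (h1 : π.map Prod.fst = μ) (h2 : π.map Prod.snd = ν) (v : ℝ) :
    ENNReal.ofReal |cdfFun μ v - cdfFun ν v| ≤ π (SD v) := by
  have hD1 : π {p : ℝ × ℝ | p.1 ≤ v} = μ (Set.Iic v) := by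
    rw [← h1, Measure.map_apply measurable_fst measurableSet_Iic]; rfl
  have hD2 : π {p : ℝ × ℝ | p.2 ≤ v} = ν (Set.Iic v) := by
    rw [← h2, Measure.map_apply measurable_snd measurableSet_Iic]; rfl
  have key : ∀ (s t : Set (ℝ × ℝ)), s ⊆ SD v ∪ t → π s - π t ≤ π (SD v) := by
    intro s t hst
    rw [tsub_le_iff_right]
    exact le_trans (measure_mono hst) (measure_union_le _ _)
  have k1 : μ (Set.Iic v) - ν (Set.Iic v) ≤ π (SD v) := by
    rw [← hD1, ← hD2]
    refine key _ _ (fun p hp => ?_)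
    by_cases h : p.2 ≤ v
    · exact Or.inr h
    · exact Or.inl (Or.inl ⟨hp, h⟩)
  have k2 : ν (Set.Iic v) - μ (Set.Iic v) ≤ π (SD v) := by
    rw [← hD1, ← hD2]
    refine key _ _ (fun p hp => ?_)
    by_cases h : p.1 ≤ v
    · exact Or.inr h
    · exact Or.inl (Or.inr ⟨hp, h⟩)
  rcases le_total (cdfFun μ v) (cdfFun ν v) with h | h
  · rw [abs_of_nonpos (by linarith), neg_sub]
    unfold cdfFun
    rw [ENNReal.ofReal_sub _ ENNReal.toReal_nonneg,
      ENNReal.ofReal_toReal (measure_ne_top _ _), ENNReal.ofReal_toReal (measure_ne_top _ _)]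
    exact k2
  · rw [abs_of_nonneg (by linarith)]
    unfold cdfFun
    rw [ENNReal.ofReal_sub _ ENNReal.toReal_nonneg,
      ENNReal.ofReal_toReal (measure_ne_top _ _), ENNReal.ofReal_toReal (measure_ne_top _ _)]
    exact k1

lemma sd_eq_mono (μ ν : Measure ℝ) [IsProbabilityMeasure μ] [IsProbabilityMeasure ν] (v : ℝ) :
    (Measure.map (fun t => (quant μ t, quant ν t)) (volume.restrict (Set.Ioo (0:ℝ) 1))) (SD v)
      = ENNReal.ofReal |cdfFun μ v - cdfFun ν v| := by
  have hT : AEMeasurable (fun t => (quant μ t, quant ν t))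
      (volume.restrict (Set.Ioo (0:ℝ) 1)) :=
    quant_aemeasurable.prodMk quant_aemeasurable
  rw [Measure.map_apply_of_aemeasurable hT (SD_measurable v),
    Measure.restrict_apply₀' measurableSet_Ioo.nullMeasurableSet]
  set a := cdfFun μ v with hadef
  set b := cdfFun ν v with hbdef
  have ha := cdfFun_mem_Icc (μ := μ) v
  have hb := cdfFun_mem_Icc (μ := ν) v
  rw [← hadef] at ha; rw [← hbdef] at hb
  have hset : (fun t => (quant μ t, quant ν t)) ⁻¹' SD v ∩ Set.Ioo (0:ℝ) 1
      = Set.Ioc (min a b) (max a b) ∩ Set.Ioo (0:ℝ) 1 := by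
    ext t
    simp only [mem_inter_iff, mem_preimage, and_congr_left_iff, mem_Ioc]
    intro ht
    have hqa : quant μ t ≤ v ↔ t ≤ a := quant_le_iff ht
    have hqb : quant ν t ≤ v ↔ t ≤ b := quant_le_iff ht
    show ((quant μ t ≤ v ∧ ¬ quant ν t ≤ v) ∨ (quant ν t ≤ v ∧ ¬ quant μ t ≤ v)) ↔ _
    simp only [hqa, hqb, not_le]
    constructor
    · rintro (⟨h1, h2⟩ | ⟨h1, h2⟩)
      · exact ⟨lt_of_le_of_lt (min_le_right a b) h2, le_trans h1 (le_max_left a b)⟩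
      · exact ⟨lt_of_le_of_lt (min_le_left a b) h2, le_trans h1 (le_max_right a b)⟩
    · rintro ⟨h1, h2⟩
      rcases le_total a b with hab | hab
      · rw [min_eq_left hab] at h1; rw [max_eq_right hab] at h2
        exact Or.inr ⟨h2, h1⟩
      · rw [min_eq_right hab] at h1; rw [max_eq_left hab] at h2
        exact Or.inl ⟨h2, h1⟩
  rw [hset]
  have h0 : (0:ℝ) ≤ min a b := le_min ha.1 hb.1
  have h1 : max a b ≤ 1 := max_le ha.2 hb.2
  have hle : volume (Set.Ioc (min a b) (max a b) ∩ Set.Ioo (0:ℝ) 1)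
      ≤ ENNReal.ofReal (max a b - min a b) := by
    refine le_trans (measure_mono Set.inter_subset_left) ?_
    rw [Real.volume_Ioc]
  have hge : ENNReal.ofReal (max a b - min a b)
      ≤ volume (Set.Ioc (min a b) (max a b) ∩ Set.Ioo (0:ℝ) 1) := by
    rw [← Real.volume_Ioo]
    refine measure_mono (fun t ht => ⟨⟨ht.1, le_of_lt ht.2⟩,
      lt_of_le_of_lt h0 ht.1, lt_of_lt_of_le ht.2 h1⟩)
  rw [le_antisymm hle hge, max_sub_min_eq_abs, abs_sub_comm]

lemma cdfFun_measurable (μ : Measure ℝ) [IsProbabilityMeasure μ] : Measurable (cdfFun μ) := by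
  have : Monotone (cdfFun μ) := by
    intro x y hxy
    exact ENNReal.toReal_mono (measure_ne_top μ _) (measure_mono (Set.Iic_subset_Iic.2 hxy))
  exact this.measurable

/-- For probability measures on ℝ with finite first moment, the
1-Wasserstein distance equals the L¹ distance between their CDFs. -/
theorem wasserstein_eq_integral_cdf
    (μ ν : Measure ℝ) [IsProbabilityMeasure μ] [IsProbabilityMeasure ν]
    (hμ : Integrable (fun x : ℝ => |x|) μ)
    (hν : Integrable (fun x : ℝ => |x|) ν) :
    W1 μ ν = ∫ v : ℝ, |cdfFun μ v - cdfFun ν v| := by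
  set L : ℝ≥0∞ := ∫⁻ v, ENNReal.ofReal |cdfFun μ v - cdfFun ν v| with hL
  set R : ℝ := ∫ v : ℝ, |cdfFun μ v - cdfFun ν v| with hRdef
  have hFmeas : Measurable (fun v => |cdfFun μ v - cdfFun ν v|) :=
    ((cdfFun_measurable μ).sub (cdfFun_measurable ν)).abs
  have hR : R = L.toReal := by
    rw [hRdef, integral_eq_lintegral_of_nonneg_ae (ae_of_all _ fun v => abs_nonneg _)
      hFmeas.aestronglyMeasurable]
  -- the monotone coupling
  have hP : IsProbabilityMeasure (volume.restrict (Set.Ioo (0:ℝ) 1)) :=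
    ⟨by simp [Real.volume_Ioo]⟩
  have hT : AEMeasurable (fun t => (quant μ t, quant ν t))
      (volume.restrict (Set.Ioo (0:ℝ) 1)) :=
    quant_aemeasurable.prodMk quant_aemeasurable
  set π₀ : Measure (ℝ × ℝ) :=
    (volume.restrict (Set.Ioo (0:ℝ) 1)).map (fun t => (quant μ t, quant ν t)) with hπ₀
  have hπ₀prob : IsProbabilityMeasure π₀ := Measure.isProbabilityMeasure_map hT
  have hm1 : π₀.map Prod.fst = μ := by
    rw [hπ₀, AEMeasurable.map_map_of_aemeasurable measurable_fst.aemeasurable hT]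
    exact map_quant
  have hm2 : π₀.map Prod.snd = ν := by
    rw [hπ₀, AEMeasurable.map_map_of_aemeasurable measurable_snd.aemeasurable hT]
    exact map_quant
  -- integrability of the cost under any coupling
  have hint : ∀ (π : Measure (ℝ × ℝ)), IsProbabilityMeasure π → π.map Prod.fst = μ →
      π.map Prod.snd = ν → Integrable (fun p : ℝ × ℝ => |p.1 - p.2|) π := by
    intro π hπ h1 h2
    have i1 : Integrable (fun p : ℝ × ℝ => |p.1|) π := by
      have h := h1 ▸ hμ
      exact (integrable_map_measure continuous_abs.aestronglyMeasurable
        measurable_fst.aemeasurable).mp h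
    have i2 : Integrable (fun p : ℝ × ℝ => |p.2|) π := by
      have h := h2 ▸ hν
      exact (integrable_map_measure continuous_abs.aestronglyMeasurable
        measurable_snd.aemeasurable).mp h
    refine Integrable.mono' (i1.add i2) ?_ (ae_of_all _ fun p => ?_)
    · exact ((continuous_fst.sub continuous_snd).abs).aestronglyMeasurable
    · rw [Real.norm_eq_abs, abs_abs]
      calc |p.1 - p.2| ≤ |p.1| + |(-p.2)| := by rw [sub_eq_add_neg]; exact abs_add_le _ _
        _ = |p.1| + |p.2| := by rw [abs_neg]
  -- value of each coupling as toReal of a lintegral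
  have hval : ∀ (π : Measure (ℝ × ℝ)), IsProbabilityMeasure π →
      ∫ p : ℝ × ℝ, |p.1 - p.2| ∂π = (∫⁻ p, ENNReal.ofReal |p.1 - p.2| ∂π).toReal := by
    intro π hπ
    rw [integral_eq_lintegral_of_nonneg_ae (ae_of_all _ fun p => abs_nonneg _)
      (show Continuous (fun p : ℝ × ℝ => |p.1 - p.2|) from
        (continuous_fst.sub continuous_snd).abs).aestronglyMeasurable]
  -- the monotone coupling achieves L
  have h0 : ∫⁻ p, ENNReal.ofReal |p.1 - p.2| ∂π₀ = L := by
    rw [lintegral_cost_eq]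
    exact lintegral_congr (fun v => sd_eq_mono μ ν v)
  have hmem : R ∈ {c : ℝ | ∃ π : Measure (ℝ × ℝ), IsProbabilityMeasure π ∧
      π.map Prod.fst = μ ∧ π.map Prod.snd = ν ∧
      c = ∫ p : ℝ × ℝ, |p.1 - p.2| ∂π} := by
    refine ⟨π₀, hπ₀prob, hm1, hm2, ?_⟩
    rw [hval π₀ hπ₀prob, h0, hR]
  have hlow : ∀ c ∈ {c : ℝ | ∃ π : Measure (ℝ × ℝ), IsProbabilityMeasure π ∧
      π.map Prod.fst = μ ∧ π.map Prod.snd = ν ∧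
      c = ∫ p : ℝ × ℝ, |p.1 - p.2| ∂π}, R ≤ c := by
    rintro c ⟨π, hπ, h1, h2, rfl⟩
    have hLle : L ≤ ∫⁻ p, ENNReal.ofReal |p.1 - p.2| ∂π := by
      rw [lintegral_cost_eq]
      exact lintegral_mono (fun v => sd_ge μ ν π h1 h2 v)
    have hfin : ∫⁻ p, ENNReal.ofReal |p.1 - p.2| ∂π ≠ ⊤ :=
      (Integrable.lintegral_lt_top (hint π hπ h1 h2)).ne
    rw [hval π hπ, hR]
    exact ENNReal.toReal_mono hfin hLle
  exact le_antisymm (csInf_le ⟨R, hlow⟩ hmem) (le_csInf ⟨R, hmem⟩ hlow)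
end

section
/- For probability measures μ, ν on ℝ with finite r-th moment (r ≥ 1), if Z is uniformly distributed on (0,1), then (F_μ⁻¹(Z), F_ν⁻¹(Z)) is an optimal coupling, i.e., W_r(μ,ν)^r = ∫₀¹ |F_μ⁻¹(z) − F_ν⁻¹(z)|^r dz. -/
open MeasureTheory ProbabilityTheory Set Filter Topology intervalIntegral

/-- Generalized inverse (quantile function) of a measure on ℝ. -/
noncomputable def quantileFun (μ : Measure ℝ) (z : ℝ) : ℝ :=
  sInf {v : ℝ | z ≤ (μ (Set.Iic v)).toReal}


variable {μ : Measure ℝ} [IsProbabilityMeasure μ]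

lemma quantileFun_eq (z : ℝ) : quantileFun μ z = sInf {v | z ≤ cdf μ v} := by
  simp only [quantileFun, cdf_eq_real, measureReal_def]

lemma qset_nonempty {z : ℝ} (hz : z < 1) : {v | z ≤ cdf μ v}.Nonempty := by
  have h := tendsto_cdf_atTop (μ := μ)
  obtain ⟨v, hv⟩ := (h.eventually_const_lt hz).exists
  exact ⟨v, hv.le⟩

lemma qset_bddBelow {z : ℝ} (hz : 0 < z) : BddBelow {v | z ≤ cdf μ v} := by
  have h := tendsto_cdf_atBot (μ := μ)
  obtain ⟨v0, hv0⟩ := (h.eventually_lt_const hz).exists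
  refine ⟨v0, fun v hv => ?_⟩
  by_contra hlt
  push_neg at hlt
  exact absurd (le_trans hv (monotone_cdf μ hlt.le)) (not_le.mpr hv0)

lemma le_cdf_quantileFun {z : ℝ} (hz0 : 0 < z) (hz1 : z < 1) : z ≤ cdf μ (quantileFun μ z) := by
  rw [quantileFun_eq]
  set S := {v | z ≤ cdf μ v} with hS
  have hne : S.Nonempty := qset_nonempty hz1
  have hbdd : BddBelow S := qset_bddBelow hz0
  have hmono := monotone_cdf μ
  have hright : ContinuousWithinAt (cdf μ) (Ici (sInf S)) (sInf S) := (cdf μ).right_continuous _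
  have h2 : ∀ v ∈ Ioi (sInf S), z ≤ cdf μ v := by
    intro v hv
    obtain ⟨s, hsS, hs⟩ := (csInf_lt_iff hbdd hne).mp hv
    exact le_trans hsS (hmono hs.le)
  have : Tendsto (cdf μ) (nhdsWithin (sInf S) (Ioi (sInf S))) (𝓝 (cdf μ (sInf S))) :=
    hright.tendsto.mono_left (nhdsWithin_mono _ Ioi_subset_Ici_self)
  exact ge_of_tendsto this (eventually_nhdsWithin_of_forall h2)

lemma quantileFun_le_iff {z v : ℝ} (hz0 : 0 < z) (hz1 : z < 1) :
    quantileFun μ z ≤ v ↔ z ≤ cdf μ v := by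
  constructor
  · intro h
    exact le_trans (le_cdf_quantileFun hz0 hz1) (monotone_cdf μ h)
  · intro h
    rw [quantileFun_eq]
    exact csInf_le (qset_bddBelow hz0) h

omit [IsProbabilityMeasure μ] in
lemma quantileFun_nonpos {z : ℝ} (hz : z ≤ 0) : quantileFun μ z = 0 := by
  have : {v : ℝ | z ≤ (μ (Set.Iic v)).toReal} = univ := by
    ext v; simp only [mem_setOf_eq, mem_univ, iff_true]
    exact le_trans hz ENNReal.toReal_nonneg
  rw [quantileFun, this]
  exact Real.sInf_of_not_bddBelow (by simpa using not_bddBelow_univ)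

lemma quantileFun_gt_one {z : ℝ} (hz : 1 < z) : quantileFun μ z = 0 := by
  have : {v : ℝ | z ≤ (μ (Set.Iic v)).toReal} = ∅ := by
    ext v; simp only [mem_setOf_eq, mem_empty_iff_false, iff_false, not_le]
    have h1 : (μ (Set.Iic v)).toReal ≤ 1 := by
      have : μ (Set.Iic v) ≤ 1 := prob_le_one
      have := ENNReal.toReal_mono (by simp) this
      simpa using this
    linarith
  rw [quantileFun, this, Real.sInf_empty]

lemma measurable_quantileFun : Measurable (quantileFun μ) := by
  apply measurable_of_Iic
  intro v
  have : quantileFun μ ⁻¹' Iic v =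
      (Ioo (0:ℝ) 1 ∩ Iic (cdf μ v)) ∪
      ((Iic (0:ℝ) ∪ Ioi 1) ∩ (if (0:ℝ) ≤ v then univ else ∅)) ∪
      (if quantileFun μ 1 ≤ v then {(1:ℝ)} else ∅) := by
    ext z
    simp only [mem_preimage, mem_Iic, mem_union, mem_inter_iff, mem_Ioo, mem_Iic, mem_Ioi]
    constructor
    · intro h
      rcases le_or_gt z 0 with h0 | h0
      · left; right
        refine ⟨Or.inl h0, ?_⟩
        rw [quantileFun_nonpos h0] at h
        simp [h]
      rcases lt_trichotomy z 1 with h1 | h1 | h1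
      · left; left
        exact ⟨⟨h0, h1⟩, (quantileFun_le_iff h0 h1).mp h⟩
      · right; subst h1; simp [h]
      · left; right
        refine ⟨Or.inr h1, ?_⟩
        rw [quantileFun_gt_one h1] at h
        simp [h]
    · rintro ((⟨⟨h0, h1⟩, h⟩ | ⟨h01, h⟩) | h)
      · exact (quantileFun_le_iff h0 h1).mpr h
      · split_ifs at h with hv
        · rcases h01 with h0 | h1
          · rw [quantileFun_nonpos h0]; exact hv
          · rw [quantileFun_gt_one h1]; exact hv
        · exact absurd h (notMem_empty z)
      · split_ifs at h with hv
        · simp only [mem_singleton_iff] at h; subst h; exact hv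
        · exact absurd h (notMem_empty z)
  rw [this]
  apply MeasurableSet.union
  apply MeasurableSet.union
  · exact (measurableSet_Ioo.inter measurableSet_Iic)
  · exact ((measurableSet_Iic.union measurableSet_Ioi).inter (by split_ifs <;> simp))
  · split_ifs <;> simp

lemma volume_Ioo_inter_Iic {c : ℝ} (h0 : 0 ≤ c) (h1 : c ≤ 1) :
    volume (Ioo (0:ℝ) 1 ∩ Iic c) = ENNReal.ofReal c := by
  rcases lt_or_ge c 1 with hc | hc
  · have : Ioo (0:ℝ) 1 ∩ Iic c = Ioc 0 c := by
      ext z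
      simp only [mem_inter_iff, mem_Ioo, mem_Iic, mem_Ioc]
      exact ⟨fun ⟨⟨a, _⟩, b⟩ => ⟨a, b⟩, fun ⟨a, b⟩ => ⟨⟨a, lt_of_le_of_lt b hc⟩, b⟩⟩
    rw [this, Real.volume_Ioc]; simp
  · have hc1 : c = 1 := le_antisymm h1 hc
    subst hc1
    have : Ioo (0:ℝ) 1 ∩ Iic 1 = Ioo 0 1 := by
      apply inter_eq_left.mpr
      intro z hz; exact hz.2.le
    rw [this, Real.volume_Ioo]
    simp

lemma map_quantileFun : (volume.restrict (Ioo (0:ℝ) 1)).map (quantileFun μ) = μ := by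
  refine Measure.ext_of_Iic _ _ (fun v => ?_)
  rw [Measure.map_apply measurable_quantileFun measurableSet_Iic,
    Measure.restrict_apply (measurable_quantileFun measurableSet_Iic)]
  have hset : quantileFun μ ⁻¹' Iic v ∩ Ioo 0 1 = Ioo (0:ℝ) 1 ∩ Iic (cdf μ v) := by
    ext z
    simp only [mem_inter_iff, mem_preimage, mem_Iic, mem_Ioo]
    constructor
    · rintro ⟨h, h0, h1⟩
      exact ⟨⟨h0, h1⟩, (quantileFun_le_iff h0 h1).mp h⟩
    · rintro ⟨⟨h0, h1⟩, h⟩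
      exact ⟨(quantileFun_le_iff h0 h1).mpr h, h0, h1⟩
  rw [hset, volume_Ioo_inter_Iic (cdf_nonneg μ v) (cdf_le_one μ v), ofReal_cdf]

lemma monotoneOn_quantileFun : MonotoneOn (quantileFun μ) (Ioo (0:ℝ) 1) := by
  intro z hz z' hz' hle
  rw [quantileFun_eq, quantileFun_eq]
  apply csInf_le_csInf (qset_bddBelow hz.1) (qset_nonempty hz'.2)
  intro v hv
  exact le_trans hle hv

section two
variable {ν : Measure ℝ} [IsProbabilityMeasure ν]

lemma comonotone_survival (a t : ℝ) :
    (volume.restrict (Ioo (0:ℝ) 1)) {z | a ≤ quantileFun μ z ∧ t < quantileFun ν z}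
      = min (μ (Ici a)) (ν (Ioi t)) := by
  have hmeas : MeasurableSet {z : ℝ | a ≤ quantileFun μ z ∧ t < quantileFun ν z} := by
    apply MeasurableSet.inter
    · exact measurable_quantileFun measurableSet_Ici
    · exact measurable_quantileFun measurableSet_Ioi
  set A := {z : ℝ | a ≤ quantileFun μ z} ∩ Ioo (0:ℝ) 1 with hA
  set B := {z : ℝ | t < quantileFun ν z} ∩ Ioo (0:ℝ) 1 with hB
  have hvolA : volume A = μ (Ici a) := by
    rw [← map_quantileFun (μ := μ), Measure.map_apply measurable_quantileFun measurableSet_Ici,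
      Measure.restrict_apply (measurable_quantileFun measurableSet_Ici)]
    rfl
  have hvolB : volume B = ν (Ioi t) := by
    rw [← map_quantileFun (μ := ν), Measure.map_apply measurable_quantileFun measurableSet_Ioi,
      Measure.restrict_apply (measurable_quantileFun measurableSet_Ioi)]
    rfl
  have hup : A ⊆ B ∨ B ⊆ A := by
    by_contra h
    push_neg at h
    obtain ⟨h1, h2⟩ := h
    obtain ⟨x, hxA, hxB⟩ := Set.not_subset.mp h1
    obtain ⟨y, hyB, hyA⟩ := Set.not_subset.mp h2
    rcases le_total x y with hxy | hxy
    · exact hyA ⟨le_trans hxA.1 (monotoneOn_quantileFun hxA.2 hyB.2 hxy), hyB.2⟩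
    · exact hxB ⟨lt_of_lt_of_le hyB.1 (monotoneOn_quantileFun hyB.2 hxA.2 hxy), hxA.2⟩
  have hSet : {z : ℝ | a ≤ quantileFun μ z ∧ t < quantileFun ν z} ∩ Ioo (0:ℝ) 1 = A ∩ B := by
    ext z
    simp only [hA, hB, mem_inter_iff, mem_setOf_eq, mem_Ioo]
    tauto
  rw [Measure.restrict_apply hmeas, hSet]
  rcases hup with hsub | hsub
  · rw [inter_eq_left.mpr hsub, hvolA]
    have : μ (Ici a) ≤ ν (Ioi t) := by
      rw [← hvolA, ← hvolB]; exact measure_mono hsub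
    exact (min_eq_left this).symm
  · rw [inter_eq_right.mpr hsub, hvolB]
    have : ν (Ioi t) ≤ μ (Ici a) := by
      rw [← hvolA, ← hvolB]; exact measure_mono hsub
    exact (min_eq_right this).symm

end two

section analytic


noncomputable def fder (r t : ℝ) : ℝ :=
  if 0 ≤ t then r * t ^ (r - 1) else -(r * (-t) ^ (r - 1))

variable {r : ℝ}

lemma fder_nonneg (hr : 1 ≤ r) {t : ℝ} (ht : 0 ≤ t) : 0 ≤ fder r t := by
  rw [fder, if_pos ht]
  exact mul_nonneg (by linarith) (Real.rpow_nonneg ht _)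

lemma fder_nonpos (hr : 1 ≤ r) {t : ℝ} (ht : t < 0) : fder r t ≤ 0 := by
  rw [fder, if_neg (not_le.mpr ht)]
  simp only [neg_nonpos]
  exact mul_nonneg (by linarith) (Real.rpow_nonneg (by linarith) _)

lemma monotone_fder (hr : 1 ≤ r) : Monotone (fder r) := by
  intro s t hst
  rcases le_or_gt 0 s with hs | hs
  · rw [fder, if_pos hs, fder, if_pos (hs.trans hst)]
    exact mul_le_mul_of_nonneg_left (Real.rpow_le_rpow hs hst (by linarith)) (by linarith)
  · rcases le_or_gt 0 t with ht | ht
    · exact le_trans (fder_nonpos hr hs) (fder_nonneg hr ht)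
    · rw [fder, if_neg (not_le.mpr hs), fder, if_neg (not_le.mpr ht), neg_le_neg_iff]
      exact mul_le_mul_of_nonneg_left
        (Real.rpow_le_rpow (by linarith) (by linarith) (by linarith)) (by linarith)

lemma rightcont_fder (hr : 1 ≤ r) : ∀ x, ContinuousWithinAt (fder r) (Ici x) x := by
  intro x
  rcases lt_trichotomy x 0 with hx | hx | hx
  · have : ∀ᶠ t in 𝓝 x, fder r t = -(r * (-t) ^ (r - 1)) := by
      filter_upwards [Iio_mem_nhds hx] with t ht
      rw [fder, if_neg (not_le.mpr ht)]
    have hc : ContinuousAt (fun t : ℝ => -(r * (-t) ^ (r - 1))) x := by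
      apply ContinuousAt.neg
      apply ContinuousAt.mul continuousAt_const
      exact ((Real.continuous_rpow_const (by linarith)).comp continuous_neg).continuousAt
    exact (hc.congr (this.mono fun t ht => ht.symm)).continuousWithinAt
  · subst hx
    apply ContinuousWithinAt.congr (f := fun t => r * t ^ (r - 1))
    · exact (ContinuousAt.mul continuousAt_const
        (Real.continuous_rpow_const (by linarith)).continuousAt).continuousWithinAt
    · intro t ht
      simp [fder, mem_Ici.mp ht]
    · simp [fder]
  · have : ∀ᶠ t in 𝓝 x, fder r t = r * t ^ (r - 1) := by
      filter_upwards [Ioi_mem_nhds hx] with t ht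
      rw [fder, if_pos ht.le]
    have hc : ContinuousAt (fun t : ℝ => r * t ^ (r - 1)) x :=
      ContinuousAt.mul continuousAt_const (Real.continuous_rpow_const (by linarith)).continuousAt
    exact (hc.congr (this.mono fun t ht => ht.symm)).continuousWithinAt

lemma intervalIntegrable_fder (hr : 1 ≤ r) (a b : ℝ) :
    IntervalIntegrable (fder r) volume a b :=
  (monotone_fder hr).intervalIntegrable

lemma integral_fder_zero (hr : 1 ≤ r) (x : ℝ) :
    ∫ t in (0:ℝ)..x, fder r t = |x| ^ r := by
  have hr0 : r ≠ 0 := by linarith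
  rcases le_or_gt 0 x with hx | hx
  · have hcong : ∀ t ∈ uIcc (0:ℝ) x, fder r t = r * t ^ (r - 1) := by
      intro t ht
      rw [uIcc_of_le hx] at ht
      rw [fder, if_pos ht.1]
    rw [integral_congr hcong, intervalIntegral.integral_const_mul, integral_rpow (by left; linarith)]
    have h1 : r - 1 + 1 = r := by ring
    rw [h1, Real.zero_rpow hr0, abs_of_nonneg hx]
    field_simp
    ring
  · have h0 : ∀ᵐ t : ℝ ∂(volume : Measure ℝ), t ≠ 0 := by
      rw [ae_iff]
      simpa using measure_singleton (0:ℝ)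
    have hIoc : uIoc (0:ℝ) x = Ioc x 0 := by
      rw [uIoc_of_ge hx.le]
    have hae : ∀ᵐ t ∂(volume : Measure ℝ), t ∈ uIoc (0:ℝ) x → fder r t = -(r * (-t) ^ (r - 1)) := by
      filter_upwards [h0] with t ht0 hti
      rw [hIoc] at hti
      rw [fder, if_neg (not_le.mpr (lt_of_le_of_ne hti.2 ht0))]
    rw [integral_congr_ae hae]
    have hcn := intervalIntegral.integral_comp_neg (a := (0:ℝ)) (b := x) (fun s => -(r * s ^ (r - 1)))
    simp only [neg_zero] at hcn
    rw [hcn, intervalIntegral.integral_neg, intervalIntegral.integral_const_mul,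
      integral_rpow (by left; linarith)]
    have h1 : r - 1 + 1 = r := by ring
    rw [h1, Real.zero_rpow hr0, abs_of_neg hx]
    have hxp : (0:ℝ) < -x := by linarith
    field_simp
    ring

lemma integral_fder (hr : 1 ≤ r) (a b : ℝ) :
    ∫ t in a..b, fder r t = |b| ^ r - |a| ^ r := by
  rw [← intervalIntegral.integral_add_adjacent_intervals (b := 0)
    (intervalIntegrable_fder hr a 0) (intervalIntegrable_fder hr 0 b),
    integral_fder_zero hr b]
  rw [intervalIntegral.integral_symm, integral_fder_zero hr a]
  ring

noncomputable def fSt (r : ℝ) (hr : 1 ≤ r) : StieltjesFunction ℝ :=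
  ⟨fder r, monotone_fder hr, rightcont_fder hr⟩

lemma fSt_measure_Ioc (hr : 1 ≤ r) (a b : ℝ) :
    (fSt r hr).measure (Ioc a b) = ENNReal.ofReal (fder r b - fder r a) :=
  StieltjesFunction.measure_Ioc _ _ _

/-- The centered "g" functions. -/
noncomputable def gt (u a : ℝ) : ℝ := (if a ≤ u then 1 else 0) - (if a ≤ 0 then 1 else 0)

noncomputable def gc (v t : ℝ) : ℝ := (if t < v then 1 else 0) - (if t < 0 then 1 else 0)

lemma gt_eq_indicator_of_nonneg {u : ℝ} (hu : 0 ≤ u) (a : ℝ) :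
    gt u a = (Ioc 0 u).indicator (fun _ => (1:ℝ)) a := by
  rw [gt]
  rcases le_or_gt a 0 with h | h
  · rw [if_pos (h.trans hu), if_pos h, indicator_of_notMem (by simp only [mem_Ioc, not_and, not_le]; intro h'; linarith)]
    ring
  · rw [if_neg (not_le.mpr h)]
    rcases le_or_gt a u with h2 | h2
    · rw [if_pos h2, indicator_of_mem (by exact ⟨h, h2⟩)]
      ring
    · rw [if_neg (not_le.mpr h2), indicator_of_notMem (by simp; intro h'; linarith)]
      ring

lemma gt_eq_indicator_of_neg {u : ℝ} (hu : u < 0) (a : ℝ) :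
    gt u a = -((Ioc u 0).indicator (fun _ => (1:ℝ)) a) := by
  rw [gt]
  rcases le_or_gt a u with h | h
  · rw [if_pos h, if_pos (h.trans hu.le), indicator_of_notMem (by simp only [mem_Ioc, not_and, not_le]; intro h'; linarith)]
    ring
  · rw [if_neg (not_le.mpr h)]
    rcases le_or_gt a 0 with h2 | h2
    · rw [if_pos h2, indicator_of_mem (by exact ⟨h, h2⟩)]
      ring
    · rw [if_neg (not_le.mpr h2), indicator_of_notMem (by simp; intro h'; linarith)]
      ring

/-- Step (i): inner integral over the Stieltjes measure. -/
lemma integral_gt (hr : 1 ≤ r) (u t : ℝ) :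
    ∫ s, gt u (s + t) ∂(fSt r hr).measure = fder r (u - t) - fder r (-t) := by
  rcases le_or_gt 0 u with hu | hu
  · have hfun : (fun s => gt u (s + t)) =
        (Ioc (-t) (u - t)).indicator (fun _ => (1:ℝ)) := by
      funext s
      rw [gt_eq_indicator_of_nonneg hu]
      by_cases h : s + t ∈ Ioc 0 u
      · rw [indicator_of_mem h, indicator_of_mem (by constructor <;> [linarith [h.1]; linarith [h.2]])]
      · rw [indicator_of_notMem h, indicator_of_notMem (by
          intro h2; exact h ⟨by linarith [h2.1], by linarith [h2.2]⟩)]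
    rw [hfun, MeasureTheory.integral_indicator measurableSet_Ioc]
    simp only [MeasureTheory.integral_const, smul_eq_mul, mul_one, Measure.restrict_apply_univ]
    rw [measureReal_def, Measure.restrict_apply_univ, fSt_measure_Ioc, ENNReal.toReal_ofReal (by
      have := monotone_fder hr (show -t ≤ u - t by linarith)
      linarith)]
  · have hfun : (fun s => gt u (s + t)) =
        (fun s => -((Ioc (u - t) (-t)).indicator (fun _ => (1:ℝ)) s)) := by
      funext s
      rw [gt_eq_indicator_of_neg hu]
      by_cases h : s + t ∈ Ioc u 0
      · rw [indicator_of_mem h, indicator_of_mem (by constructor <;> [linarith [h.1]; linarith [h.2]])]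
      · rw [indicator_of_notMem h, indicator_of_notMem (by
          intro h2; exact h ⟨by linarith [h2.1], by linarith [h2.2]⟩)]
    rw [hfun, MeasureTheory.integral_neg, MeasureTheory.integral_indicator measurableSet_Ioc]
    simp only [MeasureTheory.integral_const, smul_eq_mul, mul_one, Measure.restrict_apply_univ]
    rw [measureReal_def, Measure.restrict_apply_univ, fSt_measure_Ioc, ENNReal.toReal_ofReal (by
      have := monotone_fder hr (show u - t ≤ -t by linarith)
      linarith)]
    ring

lemma abs_gt_le (u a : ℝ) : |gt u a| ≤ 1 := by
  rw [gt]; split_ifs <;> norm_num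

lemma abs_gc_le (v t : ℝ) : |gc v t| ≤ 1 := by
  rw [gc]; split_ifs <;> norm_num

lemma gt_eq_zero {u a : ℝ} (h : |u| < |a|) : gt u a = 0 := by
  rw [gt]
  split_ifs with h1 h2 h2
  · ring
  · exfalso
    push_neg at h2
    rw [abs_of_pos h2] at h
    have : u ≤ |u| := le_abs_self u
    linarith
  · exfalso
    push_neg at h1
    rw [abs_of_nonpos h2] at h
    have : -|u| ≤ u := neg_abs_le u
    linarith
  · ring

lemma gc_eq_zero {v t : ℝ} (h : |v| < |t|) : gc v t = 0 := by
  rw [gc]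
  split_ifs with h1 h2 h2
  · ring
  · exfalso
    push_neg at h2
    rw [abs_of_nonneg h2] at h
    have : v ≤ |v| := le_abs_self v
    linarith
  · exfalso
    push_neg at h1
    rw [abs_of_neg h2] at h
    have : -|v| ≤ v := neg_abs_le v
    linarith
  · ring

lemma gc_eq_indicator_of_nonneg {v : ℝ} (hv : 0 ≤ v) (t : ℝ) :
    gc v t = (Ico 0 v).indicator (fun _ => (1:ℝ)) t := by
  rw [gc]
  rcases lt_or_ge t 0 with h | h
  · rw [if_pos (lt_of_lt_of_le h hv), if_pos h,
      indicator_of_notMem (by simp only [mem_Ico, not_and, not_lt]; intro h'; linarith)]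
    ring
  · rw [if_neg (not_lt.mpr h)]
    rcases lt_or_ge t v with h2 | h2
    · rw [if_pos h2, indicator_of_mem (mem_Ico.mpr ⟨h, h2⟩)]; ring
    · rw [if_neg (not_lt.mpr h2),
        indicator_of_notMem (by simp only [mem_Ico, not_and, not_lt]; intro h'; linarith)]
      ring

lemma gc_eq_indicator_of_neg {v : ℝ} (hv : v < 0) (t : ℝ) :
    gc v t = -((Ico v 0).indicator (fun _ => (1:ℝ)) t) := by
  rw [gc]
  rcases lt_or_ge t v with h | h
  · rw [if_pos h, if_pos (h.trans hv),
      indicator_of_notMem (by simp only [mem_Ico, not_and, not_lt]; intro h'; linarith)]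
    ring
  · rw [if_neg (not_lt.mpr h)]
    rcases lt_or_ge t 0 with h2 | h2
    · rw [if_pos h2, indicator_of_mem (mem_Ico.mpr ⟨h, h2⟩)]; ring
    · rw [if_neg (not_lt.mpr h2),
        indicator_of_notMem (by simp only [mem_Ico, not_and, not_lt]; intro h'; linarith)]
      ring

lemma integral_gc_mul (v : ℝ) (φ : ℝ → ℝ) :
    ∫ t, gc v t * φ t = ∫ t in (0:ℝ)..v, φ t := by
  rcases le_or_gt 0 v with hv | hv
  · have : (fun t => gc v t * φ t) = (Ico 0 v).indicator φ := by
      funext t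
      rw [gc_eq_indicator_of_nonneg hv]
      by_cases h : t ∈ Ico 0 v
      · rw [indicator_of_mem h, indicator_of_mem h]; ring
      · rw [indicator_of_notMem h, indicator_of_notMem h]; ring
    rw [this, MeasureTheory.integral_indicator measurableSet_Ico,
      MeasureTheory.integral_Ico_eq_integral_Ioo, ← MeasureTheory.integral_Ioc_eq_integral_Ioo, ← intervalIntegral.integral_of_le hv]
  · have : (fun t => gc v t * φ t) = (fun t => -((Ico v 0).indicator φ t)) := by
      funext t
      rw [gc_eq_indicator_of_neg hv]
      by_cases h : t ∈ Ico v 0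
      · rw [indicator_of_mem h, indicator_of_mem h]; ring
      · rw [indicator_of_notMem h, indicator_of_notMem h]; ring
    rw [this, MeasureTheory.integral_neg, MeasureTheory.integral_indicator measurableSet_Ico,
      MeasureTheory.integral_Ico_eq_integral_Ioo, ← MeasureTheory.integral_Ioc_eq_integral_Ioo, ← intervalIntegral.integral_of_le hv.le,
      ← intervalIntegral.integral_symm]

lemma key_identity (hr : 1 ≤ r) (u v : ℝ) :
    ∫ t, gc v t * (fder r (u - t) - fder r (-t)) = |u| ^ r + |v| ^ r - |u - v| ^ r := by
  rw [integral_gc_mul]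
  have h1 : IntervalIntegrable (fun t => fder r (u - t)) volume 0 v := by
    apply Antitone.intervalIntegrable
    intro s t hst
    exact monotone_fder hr (by linarith)
  have h2 : IntervalIntegrable (fun t => fder r (-t)) volume 0 v := by
    apply Antitone.intervalIntegrable
    intro s t hst
    exact monotone_fder hr (by linarith)
  rw [intervalIntegral.integral_sub h1 h2]
  have e1 : ∫ t in (0:ℝ)..v, fder r (u - t) = |u| ^ r - |u - v| ^ r := by
    rw [intervalIntegral.integral_comp_sub_left (fder r) u, integral_fder hr]
    norm_num
  have e2 : ∫ t in (0:ℝ)..v, fder r (-t) = -(|v| ^ r) := by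
    have := intervalIntegral.integral_comp_neg (a := (0:ℝ)) (b := v) (fder r)
    rw [this, neg_zero, integral_fder hr]
    simp only [abs_zero, abs_neg]
    rw [Real.zero_rpow (by linarith : r ≠ 0)]
    ring
  rw [e1, e2]
  ring

lemma measurable_gt2 : Measurable (fun p : ℝ × ℝ => gt p.1 p.2) := by
  unfold gt
  exact ((measurable_const.ite (measurableSet_le measurable_snd measurable_fst) measurable_const)).sub
    ((measurable_const.ite (measurableSet_le measurable_snd measurable_const) measurable_const))

lemma measurable_gc2 : Measurable (fun p : ℝ × ℝ => gc p.1 p.2) := by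
  unfold gc
  exact ((measurable_const.ite (measurableSet_lt measurable_snd measurable_fst) measurable_const)).sub
    ((measurable_const.ite (measurableSet_lt measurable_snd measurable_const) measurable_const))

lemma fSt_finite_Icc (hr : 1 ≤ r) (a b : ℝ) : (fSt r hr).measure (Icc a b) < ⊤ := by
  apply lt_of_le_of_lt (measure_mono (show Icc a b ⊆ Ioc (a - 1) b from fun x hx =>
    ⟨by linarith [hx.1], hx.2⟩))
  rw [fSt_measure_Ioc]
  exact ENNReal.ofReal_lt_top

lemma psi_bound (u v t s : ℝ) :
    ‖gc v t * gt u (s + t)‖ ≤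
      ((Icc (-|v|) |v| ×ˢ Icc (-(|u| + |v|)) (|u| + |v|)).indicator (fun _ => (1:ℝ))) (t, s) := by
  rcases le_or_gt |t| |v| with ht | ht
  · rcases le_or_gt |s| (|u| + |v|) with hs | hs
    · rw [indicator_of_mem (by
        refine ⟨⟨?_, ?_⟩, ?_, ?_⟩ <;>
          [linarith [neg_abs_le t]; linarith [le_abs_self t];
           linarith [neg_abs_le s]; linarith [le_abs_self s]])]
      rw [norm_mul]
      exact mul_le_one₀ (abs_gc_le v t) (norm_nonneg _) (abs_gt_le u _)
    · have : gt u (s + t) = 0 := by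
        apply gt_eq_zero
        have h1 : |s| - |t| ≤ |s + t| := by
          have := abs_add_le (s + t) (-t)
          simp only [add_neg_cancel_right, abs_neg] at this
          linarith
        linarith
      rw [this, mul_zero, norm_zero]
      exact indicator_nonneg (fun _ _ => zero_le_one) _
  · have : gc v t = 0 := gc_eq_zero ht
    rw [this, zero_mul, norm_zero]
    exact indicator_nonneg (fun _ _ => zero_le_one) _

lemma integrable_psi (hr : 1 ≤ r) (u v : ℝ) :
    Integrable (fun q : ℝ × ℝ => gc v q.1 * gt u (q.2 + q.1))
      ((volume : Measure ℝ).prod (fSt r hr).measure) := by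
  have hmeas : Measurable (fun q : ℝ × ℝ => gc v q.1 * gt u (q.2 + q.1)) := by
    apply Measurable.mul
    · exact measurable_gc2.comp (measurable_const.prodMk measurable_fst)
    · exact measurable_gt2.comp (measurable_const.prodMk (measurable_snd.add measurable_fst))
  have hbox : MeasurableSet (Icc (-|v|) |v| ×ˢ Icc (-(|u| + |v|)) (|u| + |v|)) :=
    measurableSet_Icc.prod measurableSet_Icc
  apply Integrable.mono' (g := (Icc (-|v|) |v| ×ˢ Icc (-(|u| + |v|)) (|u| + |v|)).indicator
    (fun _ => (1:ℝ)))
  · rw [integrable_indicator_iff hbox]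
    apply (integrableOn_const_iff).mpr
    right
    rw [Measure.prod_prod]
    exact ENNReal.mul_lt_top (by rw [Real.volume_Icc]; exact ENNReal.ofReal_lt_top)
      (fSt_finite_Icc hr _ _)
  · exact hmeas.aestronglyMeasurable
  · exact Filter.Eventually.of_forall (fun q => psi_bound u v q.1 q.2)

lemma prod_identity (hr : 1 ≤ r) (u v : ℝ) :
    ∫ q : ℝ × ℝ, gc v q.1 * gt u (q.2 + q.1) ∂((volume : Measure ℝ).prod (fSt r hr).measure)
      = |u| ^ r + |v| ^ r - |u - v| ^ r := by
  rw [MeasureTheory.integral_prod _ (integrable_psi hr u v)]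
  have : ∀ t : ℝ, ∫ s, gc v t * gt u (s + t) ∂(fSt r hr).measure
      = gc v t * (fder r (u - t) - fder r (-t)) := by
    intro t
    rw [MeasureTheory.integral_const_mul, integral_gt hr]
  simp only [this]
  exact key_identity hr u v

end analytic

section coupling
variable {r : ℝ}

lemma rpow_abs_sub_le (hr0 : 0 ≤ r) (u v : ℝ) :
    |u - v| ^ r ≤ 2 ^ r * (|u| ^ r + |v| ^ r) := by
  set M := max |u| |v| with hM
  have hMnn : 0 ≤ M := le_trans (abs_nonneg u) (le_max_left _ _)
  have h1 : |u - v| ≤ 2 * M := by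
    have := abs_sub u v
    have h2 : |u| ≤ M := le_max_left _ _
    have h3 : |v| ≤ M := le_max_right _ _
    calc |u - v| ≤ |u| + |v| := abs_sub _ _
      _ ≤ 2 * M := by linarith
  have h2 : |u - v| ^ r ≤ (2 * M) ^ r := Real.rpow_le_rpow (abs_nonneg _) h1 hr0
  have h3 : (2 * M) ^ r = 2 ^ r * M ^ r := Real.mul_rpow (by norm_num) hMnn
  have h4 : M ^ r ≤ |u| ^ r + |v| ^ r := by
    rcases max_choice |u| |v| with h | h <;> rw [hM, h]
    · have := Real.rpow_nonneg (abs_nonneg v) r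
      linarith
    · have := Real.rpow_nonneg (abs_nonneg u) r
      linarith
  have h5 : (0:ℝ) ≤ 2 ^ r := Real.rpow_nonneg (by norm_num) r
  calc |u - v| ^ r ≤ 2 ^ r * M ^ r := by rw [← h3]; exact h2
    _ ≤ 2 ^ r * (|u| ^ r + |v| ^ r) := by nlinarith

lemma continuous_abs_rpow (hr0 : 0 ≤ r) : Continuous (fun x : ℝ => |x| ^ r) :=
  (Real.continuous_rpow_const hr0).comp continuous_abs

variable {μ ν : Measure ℝ} [IsProbabilityMeasure μ] [IsProbabilityMeasure ν]

lemma integrable_moment_fst (hr0 : 0 ≤ r) (π : Measure (ℝ × ℝ)) [IsProbabilityMeasure π]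
    (hπ1 : π.map Prod.fst = μ) (hμ : Integrable (fun x : ℝ => |x| ^ r) μ) :
    Integrable (fun p : ℝ × ℝ => |p.1| ^ r) π := by
  rw [← hπ1] at hμ
  exact (integrable_map_measure (continuous_abs_rpow hr0).aestronglyMeasurable
    measurable_fst.aemeasurable).mp hμ

lemma integrable_moment_snd (hr0 : 0 ≤ r) (π : Measure (ℝ × ℝ)) [IsProbabilityMeasure π]
    (hπ2 : π.map Prod.snd = ν) (hν : Integrable (fun x : ℝ => |x| ^ r) ν) :
    Integrable (fun p : ℝ × ℝ => |p.2| ^ r) π := by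
  rw [← hπ2] at hν
  exact (integrable_map_measure (continuous_abs_rpow hr0).aestronglyMeasurable
    measurable_snd.aemeasurable).mp hν

lemma integrable_cost (hr0 : 0 ≤ r) (π : Measure (ℝ × ℝ)) [IsProbabilityMeasure π]
    (hπ1 : π.map Prod.fst = μ) (hπ2 : π.map Prod.snd = ν)
    (hμ : Integrable (fun x : ℝ => |x| ^ r) μ) (hν : Integrable (fun x : ℝ => |x| ^ r) ν) :
    Integrable (fun p : ℝ × ℝ => |p.1 - p.2| ^ r) π := by
  have hbound : Integrable (fun p : ℝ × ℝ => 2 ^ r * (|p.1| ^ r + |p.2| ^ r)) π :=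
    ((integrable_moment_fst hr0 π hπ1 hμ).add (integrable_moment_snd hr0 π hπ2 hν)).const_mul _
  apply Integrable.mono' hbound
  · exact ((continuous_abs_rpow hr0).comp (continuous_fst.sub continuous_snd)).aestronglyMeasurable
  · apply Filter.Eventually.of_forall
    intro p
    rw [Real.norm_eq_abs, abs_of_nonneg (Real.rpow_nonneg (abs_nonneg _) r)]
    exact rpow_abs_sub_le hr0 p.1 p.2

lemma fder_at_nonneg (hr : 1 ≤ r) {x : ℝ} (hx : 0 ≤ x) : fder r x = r * x ^ (r - 1) := by
  rw [fder, if_pos hx]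

lemma fder_at_neg (hr : 1 ≤ r) {x : ℝ} (hx : x < 0) : fder r x = -(r * (-x) ^ (r - 1)) := by
  rw [fder, if_neg (not_le.mpr hx)]

lemma norm_int_bound (hr : 1 ≤ r) (u v : ℝ) :
    ∫ q : ℝ × ℝ, ‖gc v q.1 * gt u (q.2 + q.1)‖ ∂((volume : Measure ℝ).prod (fSt r hr).measure)
      ≤ 4 * r * 3 ^ r * (|u| ^ r + |v| ^ r + 1) := by
  set m := (volume : Measure ℝ).prod (fSt r hr).measure with hm
  set B := |u| + |v| with hB
  have hBnn : 0 ≤ B := add_nonneg (abs_nonneg _) (abs_nonneg _)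
  have hbox : MeasurableSet (Icc (-|v|) |v| ×ˢ Icc (-(|u| + |v|)) (|u| + |v|)) :=
    measurableSet_Icc.prod measurableSet_Icc
  have hIndInt : Integrable ((Icc (-|v|) |v| ×ˢ Icc (-(|u| + |v|)) (|u| + |v|)).indicator
      (fun _ => (1:ℝ))) m := by
    rw [integrable_indicator_iff hbox]
    apply (integrableOn_const_iff).mpr
    right
    rw [Measure.prod_prod]
    exact ENNReal.mul_lt_top (by rw [Real.volume_Icc]; exact ENNReal.ofReal_lt_top)
      (fSt_finite_Icc hr _ _)
  have s1 : ∫ q : ℝ × ℝ, ‖gc v q.1 * gt u (q.2 + q.1)‖ ∂m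
      ≤ ∫ q : ℝ × ℝ, ((Icc (-|v|) |v| ×ˢ Icc (-(|u| + |v|)) (|u| + |v|)).indicator
        (fun _ => (1:ℝ))) q ∂m := by
    apply MeasureTheory.integral_mono (integrable_psi hr u v).norm hIndInt
    intro q
    exact psi_bound u v q.1 q.2
  have s2 : ∫ q : ℝ × ℝ, ((Icc (-|v|) |v| ×ˢ Icc (-(|u| + |v|)) (|u| + |v|)).indicator
        (fun _ => (1:ℝ))) q ∂m
      = (m (Icc (-|v|) |v| ×ˢ Icc (-(|u| + |v|)) (|u| + |v|))).toReal := by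
    have := MeasureTheory.integral_indicator_one (μ := m) hbox
    exact this
  have s3 : (m (Icc (-|v|) |v| ×ˢ Icc (-(|u| + |v|)) (|u| + |v|))).toReal
      = (volume (Icc (-|v|) |v|)).toReal * ((fSt r hr).measure (Icc (-B) B)).toReal := by
    rw [hm, Measure.prod_prod, ENNReal.toReal_mul, hB]
  have s4 : (volume (Icc (-|v|) |v|)).toReal = 2 * |v| := by
    rw [Real.volume_Icc, ENNReal.toReal_ofReal (by linarith [abs_nonneg v])]
    ring
  have s5 : ((fSt r hr).measure (Icc (-B) B)).toReal ≤ 2 * r * (B + 1) ^ (r - 1) := by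
    have hmono : (fSt r hr).measure (Icc (-B) B) ≤ (fSt r hr).measure (Ioc (-(B+1)) (B+1)) :=
      measure_mono (fun x hx => ⟨by linarith [hx.1], by linarith [hx.2]⟩)
    have heq : (fSt r hr).measure (Ioc (-(B+1)) (B+1))
        = ENNReal.ofReal (fder r (B+1) - fder r (-(B+1))) := fSt_measure_Ioc hr _ _
    have hval : fder r (B+1) - fder r (-(B+1)) = 2 * r * (B + 1) ^ (r - 1) := by
      rw [fder_at_nonneg hr (by linarith), fder_at_neg hr (by linarith), neg_neg]
      ring
    calc ((fSt r hr).measure (Icc (-B) B)).toReal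
        ≤ ((fSt r hr).measure (Ioc (-(B+1)) (B+1))).toReal :=
          ENNReal.toReal_mono (by rw [heq]; exact ENNReal.ofReal_ne_top) hmono
      _ = 2 * r * (B + 1) ^ (r - 1) := by
          rw [heq, ENNReal.toReal_ofReal (by rw [hval]; positivity), hval]
  have hBp : (0:ℝ) < B + 1 := by linarith
  have s6 : (B + 1) ^ (r - 1) * (B + 1) = (B + 1) ^ r := by
    rw [← Real.rpow_add_one (ne_of_gt hBp)]
    norm_num
  have s7 : (B + 1) ^ r ≤ 3 ^ r * (|u| ^ r + |v| ^ r + 1) := by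
    set M := max (max |u| |v|) 1 with hMdef
    have hM1 : (1:ℝ) ≤ M := le_max_right _ _
    have hMnn : (0:ℝ) ≤ M := by linarith
    have hle : B + 1 ≤ 3 * M := by
      have h1 : |u| ≤ M := le_trans (le_max_left _ _) (le_max_left _ _)
      have h2 : |v| ≤ M := le_trans (le_max_right _ _) (le_max_left _ _)
      rw [hB]; linarith
    have e1 : (B + 1) ^ r ≤ (3 * M) ^ r := Real.rpow_le_rpow (by linarith) hle (by linarith)
    have e2 : (3 * M) ^ r = 3 ^ r * M ^ r := Real.mul_rpow (by norm_num) hMnn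
    have e3 : M ^ r ≤ |u| ^ r + |v| ^ r + 1 := by
      have hu := Real.rpow_nonneg (abs_nonneg u) r
      have hv := Real.rpow_nonneg (abs_nonneg v) r
      rcases max_choice (max |u| |v|) 1 with h | h <;> rw [hMdef, h]
      · rcases max_choice |u| |v| with h2 | h2 <;> rw [h2] <;> linarith
      · rw [Real.one_rpow]; linarith
    have h3r : (0:ℝ) ≤ 3 ^ r := Real.rpow_nonneg (by norm_num) r
    calc (B + 1) ^ r ≤ 3 ^ r * M ^ r := by rw [← e2]; exact e1
      _ ≤ 3 ^ r * (|u| ^ r + |v| ^ r + 1) := by nlinarith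
  have hvB : |v| ≤ B + 1 := by rw [hB]; linarith [abs_nonneg u]
  have hpow_nn : (0:ℝ) ≤ (B + 1) ^ (r - 1) := Real.rpow_nonneg (by linarith) _
  have hrnn : (0:ℝ) ≤ r := by linarith
  calc ∫ q : ℝ × ℝ, ‖gc v q.1 * gt u (q.2 + q.1)‖ ∂m
      ≤ (volume (Icc (-|v|) |v|)).toReal * ((fSt r hr).measure (Icc (-B) B)).toReal := by
        rw [← s3]; exact le_trans s1 (le_of_eq s2)
    _ ≤ (2 * |v|) * (2 * r * (B + 1) ^ (r - 1)) := by
        rw [s4]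
        apply mul_le_mul_of_nonneg_left s5 (by positivity)
    _ = 4 * r * (|v| * (B + 1) ^ (r - 1)) := by ring
    _ ≤ 4 * r * ((B + 1) ^ (r - 1) * (B + 1)) := by
        apply mul_le_mul_of_nonneg_left _ (by positivity)
        rw [mul_comm]
        exact mul_le_mul_of_nonneg_left hvB hpow_nn
    _ = 4 * r * (B + 1) ^ r := by rw [s6]
    _ ≤ 4 * r * (3 ^ r * (|u| ^ r + |v| ^ r + 1)) := by
        apply mul_le_mul_of_nonneg_left s7 (by positivity)
    _ = 4 * r * 3 ^ r * (|u| ^ r + |v| ^ r + 1) := by ring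
end coupling

section coupling2
variable {r : ℝ} {μ ν : Measure ℝ} [IsProbabilityMeasure μ] [IsProbabilityMeasure ν]

lemma measurable_bigF : Measurable
    (fun x : (ℝ × ℝ) × (ℝ × ℝ) => gc x.1.2 x.2.1 * gt x.1.1 (x.2.2 + x.2.1)) := by
  apply Measurable.mul
  · exact measurable_gc2.comp ((measurable_fst.snd).prodMk (measurable_snd.fst))
  · exact measurable_gt2.comp ((measurable_fst.fst).prodMk ((measurable_snd.snd).add
      (measurable_snd.fst)))

lemma integrable_bigF (hr : 1 ≤ r) (π : Measure (ℝ × ℝ)) [IsProbabilityMeasure π]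
    (hπ1 : π.map Prod.fst = μ) (hπ2 : π.map Prod.snd = ν)
    (hμ : Integrable (fun x : ℝ => |x| ^ r) μ) (hν : Integrable (fun x : ℝ => |x| ^ r) ν) :
    Integrable (fun x : (ℝ × ℝ) × (ℝ × ℝ) => gc x.1.2 x.2.1 * gt x.1.1 (x.2.2 + x.2.1))
      (π.prod ((volume : Measure ℝ).prod (fSt r hr).measure)) := by
  have hr0 : (0:ℝ) ≤ r := by linarith
  apply (integrable_prod_iff measurable_bigF.aestronglyMeasurable).mpr
  constructor
  · exact Filter.Eventually.of_forall (fun p => integrable_psi hr p.1 p.2)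
  · have hg : Integrable (fun p : ℝ × ℝ => (4 * r * 3 ^ r) * (|p.1| ^ r + |p.2| ^ r + 1)) π := by
      apply Integrable.const_mul
      exact ((integrable_moment_fst hr0 π hπ1 hμ).add
        (integrable_moment_snd hr0 π hπ2 hν)).add (integrable_const 1)
    apply Integrable.mono' hg
    · exact measurable_bigF.aestronglyMeasurable.norm.integral_prod_right'
    · apply Filter.Eventually.of_forall
      intro p
      rw [Real.norm_eq_abs, abs_of_nonneg (integral_nonneg (fun q => norm_nonneg _))]
      calc ∫ q : ℝ × ℝ, ‖gc p.2 q.1 * gt p.1 (q.2 + q.1)‖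
            ∂((volume : Measure ℝ).prod (fSt r hr).measure)
          ≤ 4 * r * 3 ^ r * (|p.1| ^ r + |p.2| ^ r + 1) := norm_int_bound hr p.1 p.2
        _ = (4 * r * 3 ^ r) * (|p.1| ^ r + |p.2| ^ r + 1) := by ring

lemma fubini_key (hr : 1 ≤ r) (π : Measure (ℝ × ℝ)) [IsProbabilityMeasure π]
    (hπ1 : π.map Prod.fst = μ) (hπ2 : π.map Prod.snd = ν)
    (hμ : Integrable (fun x : ℝ => |x| ^ r) μ) (hν : Integrable (fun x : ℝ => |x| ^ r) ν) :
    ∫ p : ℝ × ℝ, (|p.1| ^ r + |p.2| ^ r - |p.1 - p.2| ^ r) ∂π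
      = ∫ q : ℝ × ℝ, (∫ p : ℝ × ℝ, gc p.2 q.1 * gt p.1 (q.2 + q.1) ∂π)
          ∂((volume : Measure ℝ).prod (fSt r hr).measure) := by
  have h1 : ∀ p : ℝ × ℝ, |p.1| ^ r + |p.2| ^ r - |p.1 - p.2| ^ r
      = ∫ q : ℝ × ℝ, gc p.2 q.1 * gt p.1 (q.2 + q.1)
          ∂((volume : Measure ℝ).prod (fSt r hr).measure) :=
    fun p => (prod_identity hr p.1 p.2).symm
  calc ∫ p : ℝ × ℝ, (|p.1| ^ r + |p.2| ^ r - |p.1 - p.2| ^ r) ∂π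
      = ∫ p : ℝ × ℝ, (∫ q : ℝ × ℝ, gc p.2 q.1 * gt p.1 (q.2 + q.1)
          ∂((volume : Measure ℝ).prod (fSt r hr).measure)) ∂π := by
        apply MeasureTheory.integral_congr_ae
        exact Filter.Eventually.of_forall h1
    _ = _ := integral_integral_swap (integrable_bigF hr π hπ1 hπ2 hμ hν)

lemma inner_formula (π : Measure (ℝ × ℝ)) [IsProbabilityMeasure π]
    (hπ1 : π.map Prod.fst = μ) (hπ2 : π.map Prod.snd = ν) (t s : ℝ) :
    ∫ p : ℝ × ℝ, gc p.2 t * gt p.1 (s + t) ∂π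
      = (π {p : ℝ × ℝ | s + t ≤ p.1 ∧ t < p.2}).toReal
        - (if s + t ≤ 0 then (1:ℝ) else 0) * (ν (Ioi t)).toReal
        - (if t < 0 then (1:ℝ) else 0) * (μ (Ici (s + t))).toReal
        + (if s + t ≤ 0 then (1:ℝ) else 0) * (if t < 0 then (1:ℝ) else 0) := by
  have hC : MeasurableSet {p : ℝ × ℝ | s + t ≤ p.1 ∧ t < p.2} :=
    (measurableSet_le measurable_const measurable_fst).inter
      (measurableSet_lt measurable_const measurable_snd)
  have hX : MeasurableSet {p : ℝ × ℝ | s + t ≤ p.1} :=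
    measurableSet_le measurable_const measurable_fst
  have hY : MeasurableSet {p : ℝ × ℝ | t < p.2} :=
    measurableSet_lt measurable_const measurable_snd
  have iC : Integrable ({p : ℝ × ℝ | s + t ≤ p.1 ∧ t < p.2}.indicator (1 : ℝ × ℝ → ℝ)) π := by
    rw [integrable_indicator_iff hC]
    exact (integrableOn_const_iff).mpr (Or.inr (measure_lt_top _ _))
  have iX : Integrable ({p : ℝ × ℝ | s + t ≤ p.1}.indicator (1 : ℝ × ℝ → ℝ)) π := by
    rw [integrable_indicator_iff hX]
    exact (integrableOn_const_iff).mpr (Or.inr (measure_lt_top _ _))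
  have iY : Integrable ({p : ℝ × ℝ | t < p.2}.indicator (1 : ℝ × ℝ → ℝ)) π := by
    rw [integrable_indicator_iff hY]
    exact (integrableOn_const_iff).mpr (Or.inr (measure_lt_top _ _))
  have hfun : (fun p : ℝ × ℝ => gc p.2 t * gt p.1 (s + t)) =
      (fun p : ℝ × ℝ =>
        {p : ℝ × ℝ | s + t ≤ p.1 ∧ t < p.2}.indicator (1 : ℝ × ℝ → ℝ) p
        - (if s + t ≤ 0 then (1:ℝ) else 0) * {p : ℝ × ℝ | t < p.2}.indicator (1 : ℝ × ℝ → ℝ) p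
        - (if t < 0 then (1:ℝ) else 0) * {p : ℝ × ℝ | s + t ≤ p.1}.indicator (1 : ℝ × ℝ → ℝ) p
        + (if s + t ≤ 0 then (1:ℝ) else 0) * (if t < 0 then (1:ℝ) else 0)) := by
    funext p
    rw [gc, gt]
    simp only [indicator_apply, mem_setOf_eq, Pi.one_apply]
    split_ifs <;> (try ring) <;> rename_i h5 <;> first | exact absurd ⟨by assumption, by assumption⟩ h5 | exact absurd h5.1 (by assumption) | exact absurd h5.2 (by assumption)
  rw [hfun]
  have i1 : Integrable (fun p : ℝ × ℝ =>
      {p : ℝ × ℝ | s + t ≤ p.1 ∧ t < p.2}.indicator (1 : ℝ × ℝ → ℝ) p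
      - (if s + t ≤ 0 then (1:ℝ) else 0) * {p : ℝ × ℝ | t < p.2}.indicator (1 : ℝ × ℝ → ℝ) p) π :=
    iC.sub (iY.const_mul _)
  have i2 : Integrable (fun p : ℝ × ℝ =>
      ({p : ℝ × ℝ | s + t ≤ p.1 ∧ t < p.2}.indicator (1 : ℝ × ℝ → ℝ) p
      - (if s + t ≤ 0 then (1:ℝ) else 0) * {p : ℝ × ℝ | t < p.2}.indicator (1 : ℝ × ℝ → ℝ) p)
      - (if t < 0 then (1:ℝ) else 0) * {p : ℝ × ℝ | s + t ≤ p.1}.indicator (1 : ℝ × ℝ → ℝ) p) π :=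
    i1.sub (iX.const_mul _)
  rw [MeasureTheory.integral_add i2 (integrable_const _),
    MeasureTheory.integral_sub i1 (iX.const_mul _),
    MeasureTheory.integral_sub iC (iY.const_mul _), MeasureTheory.integral_const_mul,
    MeasureTheory.integral_const_mul, MeasureTheory.integral_const,
    MeasureTheory.integral_indicator_one hC, MeasureTheory.integral_indicator_one hX,
    MeasureTheory.integral_indicator_one hY]
  have h1 : π {p : ℝ × ℝ | t < p.2} = ν (Ioi t) := by
    rw [← hπ2, Measure.map_apply measurable_snd measurableSet_Ioi]
    rfl
  have h2 : π {p : ℝ × ℝ | s + t ≤ p.1} = μ (Ici (s + t)) := by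
    rw [← hπ1, Measure.map_apply measurable_fst measurableSet_Ici]
    rfl
  simp only [measureReal_def]
  rw [h1, h2]
  simp [measure_univ]

end coupling2

section final
variable {r : ℝ} {μ ν : Measure ℝ} [IsProbabilityMeasure μ] [IsProbabilityMeasure ν]

lemma isProbLeb01 : IsProbabilityMeasure (volume.restrict (Ioo (0:ℝ) 1)) :=
  ⟨by rw [Measure.restrict_apply_univ, Real.volume_Ioo]; norm_num⟩

lemma measurable_pairQ :
    Measurable (fun z => (quantileFun μ z, quantileFun ν z)) :=
  measurable_quantileFun.prodMk measurable_quantileFun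

lemma pist_fst :
    ((volume.restrict (Ioo (0:ℝ) 1)).map
      (fun z => (quantileFun μ z, quantileFun ν z))).map Prod.fst = μ := by
  rw [Measure.map_map measurable_fst measurable_pairQ]
  exact map_quantileFun

lemma pist_snd :
    ((volume.restrict (Ioo (0:ℝ) 1)).map
      (fun z => (quantileFun μ z, quantileFun ν z))).map Prod.snd = ν := by
  rw [Measure.map_map measurable_snd measurable_pairQ]
  exact map_quantileFun

lemma measC (a t : ℝ) : MeasurableSet {p : ℝ × ℝ | a ≤ p.1 ∧ t < p.2} :=
  (measurableSet_le measurable_const measurable_fst).inter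
    (measurableSet_lt measurable_const measurable_snd)

lemma pist_C (a t : ℝ) :
    ((volume.restrict (Ioo (0:ℝ) 1)).map
      (fun z => (quantileFun μ z, quantileFun ν z))) {p : ℝ × ℝ | a ≤ p.1 ∧ t < p.2}
      = min (μ (Ici a)) (ν (Ioi t)) := by
  rw [Measure.map_apply measurable_pairQ (measC a t)]
  exact comonotone_survival a t

lemma cost_compare (hr : 1 ≤ r)
    (hμ : Integrable (fun x : ℝ => |x| ^ r) μ) (hν : Integrable (fun x : ℝ => |x| ^ r) ν)
    (π : Measure (ℝ × ℝ)) [IsProbabilityMeasure π]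
    (hπ1 : π.map Prod.fst = μ) (hπ2 : π.map Prod.snd = ν) :
    ∫ p : ℝ × ℝ, |p.1 - p.2| ^ r
        ∂((volume.restrict (Ioo (0:ℝ) 1)).map (fun z => (quantileFun μ z, quantileFun ν z)))
      ≤ ∫ p : ℝ × ℝ, |p.1 - p.2| ^ r ∂π := by
  have hr0 : (0:ℝ) ≤ r := by linarith
  haveI : IsProbabilityMeasure (volume.restrict (Ioo (0:ℝ) 1)) := isProbLeb01
  set πst := (volume.restrict (Ioo (0:ℝ) 1)).map
    (fun z => (quantileFun μ z, quantileFun ν z)) with hπst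
  haveI : IsProbabilityMeasure πst := Measure.isProbabilityMeasure_map measurable_pairQ.aemeasurable
  have hst1 : πst.map Prod.fst = μ := pist_fst
  have hst2 : πst.map Prod.snd = ν := pist_snd
  have hcomp : ∫ p : ℝ × ℝ, (|p.1| ^ r + |p.2| ^ r - |p.1 - p.2| ^ r) ∂π
      ≤ ∫ p : ℝ × ℝ, (|p.1| ^ r + |p.2| ^ r - |p.1 - p.2| ^ r) ∂πst := by
    rw [fubini_key hr π hπ1 hπ2 hμ hν, fubini_key hr πst hst1 hst2 hμ hν]
    apply MeasureTheory.integral_mono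
      (integrable_bigF hr π hπ1 hπ2 hμ hν).integral_prod_right
      (integrable_bigF hr πst hst1 hst2 hμ hν).integral_prod_right
    intro q
    dsimp only
    rw [inner_formula π hπ1 hπ2 q.1 q.2, inner_formula πst hst1 hst2 q.1 q.2]
    have hle : π {p : ℝ × ℝ | q.2 + q.1 ≤ p.1 ∧ q.1 < p.2}
        ≤ πst {p : ℝ × ℝ | q.2 + q.1 ≤ p.1 ∧ q.1 < p.2} := by
      rw [hπst, pist_C]
      apply le_min
      · calc π {p : ℝ × ℝ | q.2 + q.1 ≤ p.1 ∧ q.1 < p.2}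
            ≤ π {p : ℝ × ℝ | q.2 + q.1 ≤ p.1} := measure_mono (fun p hp => hp.1)
          _ = μ (Ici (q.2 + q.1)) := by
              rw [← hπ1, Measure.map_apply measurable_fst measurableSet_Ici]; rfl
      · calc π {p : ℝ × ℝ | q.2 + q.1 ≤ p.1 ∧ q.1 < p.2}
            ≤ π {p : ℝ × ℝ | q.1 < p.2} := measure_mono (fun p hp => hp.2)
          _ = ν (Ioi q.1) := by
              rw [← hπ2, Measure.map_apply measurable_snd measurableSet_Ioi]; rfl
    have hmono := ENNReal.toReal_mono (measure_ne_top πst _) hle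
    linarith
  have i1π : Integrable (fun p : ℝ × ℝ => |p.1| ^ r) π := integrable_moment_fst hr0 π hπ1 hμ
  have i2π : Integrable (fun p : ℝ × ℝ => |p.2| ^ r) π := integrable_moment_snd hr0 π hπ2 hν
  have i3π : Integrable (fun p : ℝ × ℝ => |p.1 - p.2| ^ r) π :=
    integrable_cost hr0 π hπ1 hπ2 hμ hν
  have i1s : Integrable (fun p : ℝ × ℝ => |p.1| ^ r) πst := integrable_moment_fst hr0 πst hst1 hμ
  have i2s : Integrable (fun p : ℝ × ℝ => |p.2| ^ r) πst := integrable_moment_snd hr0 πst hst2 hν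
  have i3s : Integrable (fun p : ℝ × ℝ => |p.1 - p.2| ^ r) πst :=
    integrable_cost hr0 πst hst1 hst2 hμ hν
  have i12π : Integrable (fun p : ℝ × ℝ => |p.1| ^ r + |p.2| ^ r) π := i1π.add i2π
  have i12s : Integrable (fun p : ℝ × ℝ => |p.1| ^ r + |p.2| ^ r) πst := i1s.add i2s
  rw [MeasureTheory.integral_sub i12π i3π, MeasureTheory.integral_add i1π i2π,
    MeasureTheory.integral_sub i12s i3s, MeasureTheory.integral_add i1s i2s] at hcomp
  have m1 : ∫ p : ℝ × ℝ, |p.1| ^ r ∂π = ∫ p : ℝ × ℝ, |p.1| ^ r ∂πst := by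
    have e1 : ∫ x : ℝ, |x| ^ r ∂μ = ∫ p : ℝ × ℝ, |p.1| ^ r ∂π := by
      rw [← hπ1]
      exact integral_map measurable_fst.aemeasurable
        (continuous_abs_rpow hr0).aestronglyMeasurable
    have e2 : ∫ x : ℝ, |x| ^ r ∂μ = ∫ p : ℝ × ℝ, |p.1| ^ r ∂πst := by
      rw [← hst1]
      exact integral_map measurable_fst.aemeasurable
        (continuous_abs_rpow hr0).aestronglyMeasurable
    rw [← e1, e2]
  have m2 : ∫ p : ℝ × ℝ, |p.2| ^ r ∂π = ∫ p : ℝ × ℝ, |p.2| ^ r ∂πst := by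
    have e1 : ∫ x : ℝ, |x| ^ r ∂ν = ∫ p : ℝ × ℝ, |p.2| ^ r ∂π := by
      rw [← hπ2]
      exact integral_map measurable_snd.aemeasurable
        (continuous_abs_rpow hr0).aestronglyMeasurable
    have e2 : ∫ x : ℝ, |x| ^ r ∂ν = ∫ p : ℝ × ℝ, |p.2| ^ r ∂πst := by
      rw [← hst2]
      exact integral_map measurable_snd.aemeasurable
        (continuous_abs_rpow hr0).aestronglyMeasurable
    rw [← e1, e2]
  linarith

end final


/-- r-th power of the r-Wasserstein distance, defined as the infimum over couplings
of E[|U - V|^r]. -/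
noncomputable def WrPow (r : ℝ) (μ ν : Measure ℝ) : ℝ :=
  sInf {c : ℝ | ∃ π : Measure (ℝ × ℝ), IsProbabilityMeasure π ∧
    π.map Prod.fst = μ ∧ π.map Prod.snd = ν ∧
    c = ∫ p : ℝ × ℝ, |p.1 - p.2| ^ r ∂π}


/-- if Z is uniform on (0,1), then (F_μ⁻¹(Z), F_ν⁻¹(Z)) is an optimal
coupling: W_r(μ,ν)^r = ∫₀¹ |F_μ⁻¹(z) − F_ν⁻¹(z)|^r dz. -/
theorem optimal_coupling_quantile (r : ℝ) (hr : 1 ≤ r)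
    (μ ν : Measure ℝ) [IsProbabilityMeasure μ] [IsProbabilityMeasure ν]
    (hμ : Integrable (fun x : ℝ => |x| ^ r) μ)
    (hν : Integrable (fun x : ℝ => |x| ^ r) ν) :
    WrPow r μ ν = ∫ z in Set.Ioo (0:ℝ) 1, |quantileFun μ z - quantileFun ν z| ^ r := by
  have hr0 : (0:ℝ) ≤ r := le_trans zero_le_one hr
  haveI : IsProbabilityMeasure (volume.restrict (Set.Ioo (0:ℝ) 1)) := isProbLeb01
  set πst := (volume.restrict (Set.Ioo (0:ℝ) 1)).map
    (fun z => (quantileFun μ z, quantileFun ν z)) with hπst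
  haveI hprobst : IsProbabilityMeasure πst := Measure.isProbabilityMeasure_map measurable_pairQ.aemeasurable
  have htarget : ∫ z in Set.Ioo (0:ℝ) 1, |quantileFun μ z - quantileFun ν z| ^ r
      = ∫ p : ℝ × ℝ, |p.1 - p.2| ^ r ∂πst := by
    have hcont : Continuous (fun p : ℝ × ℝ => |p.1 - p.2| ^ r) :=
      (continuous_abs_rpow hr0).comp (continuous_fst.sub continuous_snd)
    rw [hπst, integral_map measurable_pairQ.aemeasurable hcont.aestronglyMeasurable]
  have hmem : (∫ p : ℝ × ℝ, |p.1 - p.2| ^ r ∂πst) ∈ {c : ℝ | ∃ π : Measure (ℝ × ℝ),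
      IsProbabilityMeasure π ∧ π.map Prod.fst = μ ∧ π.map Prod.snd = ν ∧
      c = ∫ p : ℝ × ℝ, |p.1 - p.2| ^ r ∂π} :=
    ⟨πst, hprobst, pist_fst, pist_snd, rfl⟩
  rw [WrPow, htarget]
  apply le_antisymm
  · apply csInf_le ⟨0, ?_⟩ hmem
    rintro c ⟨π, hprob, h1, h2, rfl⟩
    exact integral_nonneg fun p => Real.rpow_nonneg (abs_nonneg _) r
  · apply le_csInf ⟨_, hmem⟩
    rintro c ⟨π, hprob, h1, h2, rfl⟩
    haveI := hprob
    exact cost_compare hr hμ hν π h1 h2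
end
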